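/- As α → ∞, φ''(2) = -2α²e^{-α} + O(α²e^{-3α}): there exist constants C, α₀ > 0 such that |φ''(2) + 2α²e^{-α}| ≤ Cα²e^{-3α} for all α ≥ α₀. -/

import Mathlib

/-- Equilibrium distance parameter of the Morse potential. -/
noncomputable def morseR0 (α : ℝ) : ℝ :=
  1 + (1 / α) * Real.log ((1 + 2 * Real.exp (-α)) / (1 + 2 * Real.exp (-2 * α)))

/-- The (shifted) Morse potential with stiffness α and shift φ₀. -/
noncomputable def morse (α φ₀ : ℝ) (r : ℝ) : ℝ :=
  Real.exp (-2 * α * (r - morseR0 α)) - 2 * Real.exp (-α * (r - morseR0 α)) - φ₀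

/-- φ''(2) = -2α²e^{-α} + O(α²e^{-3α}) as α → ∞. -/
theorem stmt_4 (φ₀ : ℝ) :
    ∃ C α₀ : ℝ, 0 < C ∧ 0 < α₀ ∧ ∀ α : ℝ, α₀ ≤ α →
      |deriv (deriv (morse α φ₀)) 2 + 2 * α ^ 2 * Real.exp (-α)|
        ≤ C * α ^ 2 * Real.exp (-3 * α) := by
  refine ⟨36, 1, by norm_num, by norm_num, fun α hα => ?_⟩
  have hα0 : (0:ℝ) < α := lt_of_lt_of_le one_pos hα
  set c := morseR0 α with hc
  set x := Real.exp (-α) with hx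
  have hx0 : 0 < x := Real.exp_pos _
  have hx1 : x ≤ 1 := Real.exp_le_one_iff.mpr (by linarith)
  have hx2 : Real.exp (-2 * α) = x ^ 2 := by
    rw [hx, show (-2:ℝ) * α = (-α) + (-α) by ring, Real.exp_add]; ring
  set A : ℝ := 1 + 2 * x with hA
  set B : ℝ := 1 + 2 * x ^ 2 with hB
  have hA0 : 0 < A := by positivity
  have hB0 : 0 < B := by positivity
  have hB1 : 1 ≤ B := by nlinarith
  have hQ0 : 0 < A / B := by positivity
  -- first derivative
  have hd1 : deriv (morse α φ₀)
      = fun r => (-2*α) * Real.exp (-2*α*(r-c)) + 2*α*Real.exp (-α*(r-c)) := by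
    funext r
    have h1 : HasDerivAt (fun y : ℝ => Real.exp (-2*α*(y - c)))
        (Real.exp (-2*α*(r - c)) * (-2*α)) r := by
      simpa using (((hasDerivAt_id r).sub_const c).const_mul (-2*α)).exp
    have h2 : HasDerivAt (fun y : ℝ => Real.exp (-α*(y - c)))
        (Real.exp (-α*(r - c)) * (-α)) r := by
      simpa using (((hasDerivAt_id r).sub_const c).const_mul (-α)).exp
    have h : HasDerivAt (morse α φ₀)
        (Real.exp (-2*α*(r - c)) * (-2*α) - 2*(Real.exp (-α*(r - c)) * (-α))) r :=
      (h1.sub (h2.const_mul 2)).sub_const φ₀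
    rw [h.deriv]; ring
  -- second derivative at 2
  have hd2 : deriv (deriv (morse α φ₀)) 2
      = 4*α^2 * Real.exp (-2*α*(2-c)) - 2*α^2 * Real.exp (-α*(2-c)) := by
    rw [hd1]
    have h1 : HasDerivAt (fun y : ℝ => Real.exp (-2*α*(y - c)))
        (Real.exp (-2*α*((2:ℝ) - c)) * (-2*α)) 2 := by
      simpa using (((hasDerivAt_id (2:ℝ)).sub_const c).const_mul (-2*α)).exp
    have h2 : HasDerivAt (fun y : ℝ => Real.exp (-α*(y - c)))
        (Real.exp (-α*((2:ℝ) - c)) * (-α)) 2 := by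
      simpa using (((hasDerivAt_id (2:ℝ)).sub_const c).const_mul (-α)).exp
    have h : HasDerivAt (fun y : ℝ => -2*α*Real.exp (-2*α*(y-c)) + 2*α*Real.exp (-α*(y-c))) _ 2 :=
      (h1.const_mul (-2*α)).add (h2.const_mul (2*α))
    rw [h.deriv]; ring
  -- explicit exponentials
  have harg : -α*(2-c) = -α + Real.log (A / B) := by
    rw [hc, morseR0, ← hx, hx2, ← hA, ← hB]
    field_simp
    ring
  have hexp1 : Real.exp (-α*(2-c)) = x * (A / B) := by
    rw [harg, Real.exp_add, Real.exp_log hQ0, hx]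
  have hexp2 : Real.exp (-2*α*(2-c)) = (x * (A / B))^2 := by
    rw [show -2*α*(2-c) = (-α*(2-c)) + (-α*(2-c)) by ring, Real.exp_add, hexp1]; ring
  rw [hd2, hexp1, hexp2]
  -- algebraic identity
  have hx3 : Real.exp (-3*α) = x^3 := by
    rw [hx, show (-3:ℝ)*α = (-α) + ((-α) + (-α)) by ring, Real.exp_add, Real.exp_add]; ring
  have hE : 4*α^2 * (x * (A/B))^2 - 2*α^2 * (x * (A/B)) + 2*α^2*x
      = α^2 * x^3 * (20 + 8*x + 8*x^2) / B^2 := by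
    rw [hA, hB]
    field_simp
    ring
  have hEnn : 0 ≤ α^2 * x^3 * (20 + 8*x + 8*x^2) / B^2 := by positivity
  rw [hE, abs_of_nonneg hEnn, hx3]
  have hfrac : α^2 * x^3 * (20 + 8*x + 8*x^2) / B^2 ≤ α^2 * x^3 * (20 + 8*x + 8*x^2) :=
    div_le_self (by positivity) (by nlinarith)
  have hbd : α^2 * x^3 * (20 + 8*x + 8*x^2) ≤ 36 * α^2 * x^3 := by
    have h16 : 0 ≤ 16 - 8*x - 8*x^2 := by nlinarith
    nlinarith [mul_nonneg (mul_nonneg (sq_nonneg α) (pow_pos hx0 3).le) h16]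
  linarith
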